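/- arXiv:1905.04001 — 6 statements merged into one kernel-verified Lean document; each statement's English description precedes it below -/
import Mathlib

section
/- Suppose x ∈ G satisfies f(−x) = ⊤ and f(x) < ⊤. Then for every positive integer n one has f(n • x) = f(x) and f(−(n • x)) = ⊤; moreover n • x ≠ 0 for every positive integer n, i.e. x has infinite order in G. (Abstract form of the paper's Corollary: if r₀(Y) < ∞ and r₀(−Y) = ∞ then r₀(n[Y]) = r₀(Y) < ∞, r₀(−n[Y]) = ∞, and [Y] has infinite order in Θ³_ℤ.) -/
open scoped ENNReal

/-- Abstract form of the corollary: if `f(-x) = ⊤` and `f(x) < ⊤`, then for every positive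
integer `n` one has `f(n • x) = f(x)`, `f(-(n • x)) = ⊤`, and `n • x ≠ 0` (so `x` has
infinite order). -/
theorem stmt_1 {G : Type*} [AddCommGroup G] (f : G → ℝ≥0∞)
    (hf : ∀ x y : G, min (f x) (f y) ≤ f (x + y)) (h0 : f 0 = ⊤)
    (x : G) (hx : f (-x) = ⊤) (hfin : f x < ⊤) :
    ∀ n : ℕ, 0 < n → f (n • x) = f x ∧ f (-(n • x)) = ⊤ ∧ n • x ≠ 0 := by
  -- main induction: for n ≥ 1, f(n•x) = f x and f(-(n•x)) = ⊤
  have key : ∀ n : ℕ, 0 < n → f (n • x) = f x ∧ f (-(n • x)) = ⊤ := by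
    intro n hn
    induction n with
    | zero => omega
    | succ m ih =>
      rcases Nat.eq_zero_or_pos m with hm | hm
      · subst hm; exact ⟨by simp, by simpa using hx⟩
      · obtain ⟨ih1, ih2⟩ := ih hm
        have hneg : f (-((m + 1) • x)) = ⊤ := by
          have := hf (-(m • x)) (-x)
          rw [ih2, hx] at this
          have : f (-(m • x) + -x) = ⊤ := top_le_iff.mp (by simpa using this)
          rw [show -((m + 1) • x) = -(m • x) + -x by
            rw [succ_nsmul]; abel] at *
          exact this
        constructor
        · refine le_antisymm ?_ ?_
          · have := hf ((m + 1) • x) (-((m + 1) • x) + (m • x))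
            have h2 : f (-((m + 1) • x) + m • x) = ⊤ := by
              have h3 := hf (-((m + 1) • x)) (m • x)
              rw [hneg, ih1] at h3
              have : f x ≤ f (-((m + 1) • x) + m • x) := by
                simpa using h3
              rw [show -((m + 1) • x) + m • x = -x by
                rw [succ_nsmul]; abel] at this ⊢
              exact hx
            rw [h2, min_top_right] at this
            calc f ((m + 1) • x) ≤ f ((m + 1) • x + (-((m + 1) • x) + m • x)) := this
              _ = f x := by rw [show (m + 1) • x + (-((m + 1) • x) + m • x) = m • x by abel, ih1]
          · have := hf (m • x) x
            rw [ih1, min_self] at this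
            calc f x ≤ f (m • x + x) := this
              _ = f ((m + 1) • x) := by rw [succ_nsmul]
        · exact hneg
  intro n hn
  obtain ⟨h1, h2⟩ := key n hn
  refine ⟨h1, h2, fun hz => ?_⟩
  rw [hz, h0] at h1
  exact absurd h1.symm (ne_of_lt hfin)
end

section
/- Let m ≥ 1, let x₁, …, x_m ∈ G, and let n₁, …, n_m be integers with n_m > 0. Assume f(−x_m) = ⊤ and, for every k with 1 ≤ k < m, f(x_m) < f(x_k) and f(x_m) < f(−x_k). Then f(n₁ • x₁ + ⋯ + n_m • x_m) = f(x_m). (Abstract form of the paper's Theorem: if r₀(Y_m) < min_{k<m}{r₀(Y_k), r₀(−Y_k)}, r₀(−Y_m) = ∞ and n_m > 0, then r₀(∑ n_k[Y_k]) = r₀(Y_m).) -/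
open scoped ENNReal

private lemma aux_nsmul {G : Type*} [AddCommGroup G] (f : G → ℝ≥0∞)
    (hf : ∀ x y : G, min (f x) (f y) ≤ f (x + y)) (x : G) :
    ∀ k : ℕ, f x ≤ f ((k + 1) • x) := by
  intro k
  induction k with
  | zero => simp
  | succ k ih =>
    calc f x ≤ min (f ((k + 1) • x)) (f x) := le_min ih le_rfl
      _ ≤ f ((k + 1) • x + x) := hf _ _
      _ = f ((k + 1 + 1) • x) := by rw [succ_nsmul x (k + 1)]

private lemma aux_zsmul_pos {G : Type*} [AddCommGroup G] (f : G → ℝ≥0∞)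
    (hf : ∀ x y : G, min (f x) (f y) ≤ f (x + y)) (x : G) (n : ℤ) (hn : 0 < n) :
    f x ≤ f (n • x) := by
  obtain ⟨k, rfl⟩ : ∃ k : ℕ, n = ((k + 1 : ℕ) : ℤ) := ⟨(n - 1).toNat, by omega⟩
  rw [natCast_zsmul]
  exact aux_nsmul f hf x k

private lemma aux_zsmul_nonpos {G : Type*} [AddCommGroup G] (f : G → ℝ≥0∞)
    (hf : ∀ x y : G, min (f x) (f y) ≤ f (x + y)) (h0 : f 0 = ⊤)
    (x : G) (n : ℤ) (hn : n ≤ 0) :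
    f (-x) ≤ f (n • x) := by
  rcases eq_or_lt_of_le hn with h | h
  · simp [h, h0]
  · have : n • x = (-n) • (-x) := by simp
    rw [this]
    exact aux_zsmul_pos f hf (-x) (-n) (by omega)

private lemma aux_zsmul {G : Type*} [AddCommGroup G] (f : G → ℝ≥0∞)
    (hf : ∀ x y : G, min (f x) (f y) ≤ f (x + y)) (h0 : f 0 = ⊤)
    (x : G) (n : ℤ) :
    min (f x) (f (-x)) ≤ f (n • x) := by
  rcases lt_or_ge 0 n with h | h
  · exact le_trans (min_le_left _ _) (aux_zsmul_pos f hf x n h)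
  · exact le_trans (min_le_right _ _) (aux_zsmul_nonpos f hf h0 x n h)

private lemma aux_sum_le {G : Type*} [AddCommGroup G] (f : G → ℝ≥0∞)
    (hf : ∀ x y : G, min (f x) (f y) ≤ f (x + y)) (h0 : f 0 = ⊤)
    {ι : Type*} (s : Finset ι) (g : ι → G) (c : ℝ≥0∞)
    (hc : ∀ i ∈ s, c ≤ f (g i)) : c ≤ f (∑ i ∈ s, g i) := by
  classical
  induction s using Finset.induction with
  | empty => simp [h0]
  | insert _ _ h ih =>
    rw [Finset.sum_insert h]
    exact le_trans (le_min (hc _ (Finset.mem_insert_self _ _))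
      (ih fun i hi => hc i (Finset.mem_insert_of_mem hi))) (hf _ _)

private lemma aux_sum_lt {G : Type*} [AddCommGroup G] (f : G → ℝ≥0∞)
    (hf : ∀ x y : G, min (f x) (f y) ≤ f (x + y)) (h0 : f 0 = ⊤)
    {ι : Type*} (s : Finset ι) (g : ι → G) (c : ℝ≥0∞) (hct : c < ⊤)
    (hc : ∀ i ∈ s, c < f (g i)) : c < f (∑ i ∈ s, g i) := by
  classical
  induction s using Finset.induction with
  | empty => simpa [h0] using hct
  | insert _ _ h ih =>
    rw [Finset.sum_insert h]
    exact lt_of_lt_of_le (lt_min (hc _ (Finset.mem_insert_self _ _))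
      (ih fun i hi => hc i (Finset.mem_insert_of_mem hi))) (hf _ _)

/-- Abstract form of the theorem on linear combinations: with `m + 1` elements
`x 0, …, x (Fin.last m)` and integer coefficients `n k`, if `n (Fin.last m) > 0`,
`f (-(x (Fin.last m))) = ⊤`, and `f (x (Fin.last m)) < f (x k)` and
`f (x (Fin.last m)) < f (-(x k))` for every other index `k`, then
`f (∑ k, n k • x k) = f (x (Fin.last m))`. -/
theorem stmt_3 {G : Type*} [AddCommGroup G] (f : G → ℝ≥0∞)
    (hf : ∀ x y : G, min (f x) (f y) ≤ f (x + y)) (h0 : f 0 = ⊤)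
    (m : ℕ) (x : Fin (m + 1) → G) (n : Fin (m + 1) → ℤ)
    (hn : 0 < n (Fin.last m))
    (hneg : f (-(x (Fin.last m))) = ⊤)
    (hlt : ∀ k : Fin (m + 1), k ≠ Fin.last m →
      f (x (Fin.last m)) < f (x k) ∧ f (x (Fin.last m)) < f (-(x k))) :
    f (∑ k, n k • x k) = f (x (Fin.last m)) := by
  classical
  set L := Fin.last m with hL
  set c := f (x L) with hc
  set S := ∑ k, n k • x k with hS
  have lower : c ≤ f S := by
    apply aux_sum_le f hf h0
    intro k _
    by_cases hk : k = L
    · subst hk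
      exact aux_zsmul_pos f hf (x L) (n L) hn
    · obtain ⟨h1, h2⟩ := hlt k hk
      exact le_trans (le_min h1.le h2.le) (aux_zsmul f hf h0 (x k) (n k))
  rcases eq_or_lt_of_le (le_top : c ≤ ⊤) with htop | htop
  · exact le_antisymm (htop ▸ le_top) lower
  · have hrw : x L - S = ∑ k, ((if k = L then (1 : ℤ) else 0) - n k) • x k := by
      have step : ∀ k : Fin (m + 1), ((if k = L then (1 : ℤ) else 0) - n k) • x k
          = (if k = L then x k else 0) - n k • x k := by
        intro k; split <;> simp [sub_smul]
      rw [Finset.sum_congr rfl (fun k _ => step k), Finset.sum_sub_distrib,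
        Finset.sum_ite_eq' Finset.univ L x]
      simp [hS]
    have key : c < f (x L - S) := by
      rw [hrw]
      apply aux_sum_lt f hf h0 _ _ _ htop
      intro k _
      by_cases hk : k = L
      · subst hk
        refine lt_of_lt_of_le ?_
          (aux_zsmul_nonpos f hf h0 (x L) _ (by simp; omega))
        rw [hneg]; exact htop
      · obtain ⟨h1, h2⟩ := hlt k hk
        exact lt_of_lt_of_le (lt_min h1 h2) (aux_zsmul f hf h0 (x k) _)
    have h2 := hf S (x L - S)
    have hadd : S + (x L - S) = x L := by abel
    rw [hadd] at h2
    refine le_antisymm ?_ lower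
    by_contra hcon
    push_neg at hcon
    exact absurd h2 (not_le.mpr (lt_min hcon key))
end

section
/- Let y₀, y₁, …, y_m ∈ G satisfy f(y₀) = ⊤, f(−y₀) < ⊤, and f(−y₀) < f(y_i), f(−y₀) < f(−y_i) for every 1 ≤ i ≤ m. Then for all integers n₀, n₁, …, n_m, the equality n₀ • y₀ = n₁ • y₁ + ⋯ + n_m • y_m implies n₀ = 0; in particular ℤy₀ ∩ (ℤy₁ + ⋯ + ℤy_m) = 0 in G. (Abstract form of the paper's re-proof of Furuta's theorem on Seifert homology spheres Σ(a₁,…,a_n).) -/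
open scoped ENNReal

/-- Abstract form of Furuta's theorem: if `f y₀ = ⊤`, `f (-y₀) < ⊤`, and
`f (-y₀) < f (y i)` and `f (-y₀) < f (-(y i))` for every `i`, then any relation
`n₀ • y₀ = ∑ i, n i • y i` forces `n₀ = 0`; i.e. `ℤ y₀ ∩ (ℤ y₁ + ⋯ + ℤ y_m) = 0`. -/
theorem stmt_4 {G : Type*} [AddCommGroup G] (f : G → ℝ≥0∞)
    (hf : ∀ x y : G, min (f x) (f y) ≤ f (x + y)) (h0 : f 0 = ⊤)
    (m : ℕ) (y₀ : G) (y : Fin m → G)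
    (hy₀ : f y₀ = ⊤) (hy₀' : f (-y₀) < ⊤)
    (hy : ∀ i : Fin m, f (-y₀) < f (y i) ∧ f (-y₀) < f (-(y i))) :
    ∀ (n₀ : ℤ) (n : Fin m → ℤ), n₀ • y₀ = ∑ i, n i • y i → n₀ = 0 := by
  set c := f (-y₀) with hc
  -- nonneg multiples of y₀ have f = ⊤
  have htop : ∀ k : ℕ, f (k • y₀) = ⊤ := by
    intro k
    induction k with
    | zero => simpa using h0
    | succ k ih =>
      have := hf (k • y₀) y₀
      rw [ih, hy₀, ← succ_nsmul] at this
      simpa using this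
  -- negative multiples of y₀ have f ≤ c
  have hneg : ∀ k : ℕ, f (-(((k : ℤ) + 1) • y₀)) ≤ c := by
    intro k
    have key : (-(((k : ℤ) + 1) • y₀)) + (k : ℤ) • y₀ = -y₀ := by
      rw [← neg_smul, ← add_smul]
      norm_num
    have := hf (-(((k : ℤ) + 1) • y₀)) ((k : ℤ) • y₀)
    rw [key] at this
    have hk : f ((k : ℤ) • y₀) = ⊤ := by
      rw [natCast_zsmul]; exact htop k
    rw [hk, inf_top_eq] at this
    exact this
  -- c < f (n • x) whenever c < f x and c < f (-x)
  have hmulnat : ∀ (x : G) (k : ℕ), c < f x → c < f (k • x) := by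
    intro x k hx
    induction k with
    | zero => simpa [h0] using hy₀'
    | succ k ih =>
      rw [succ_nsmul]
      exact lt_of_lt_of_le (lt_min ih hx) (hf _ _)
  have hmul : ∀ (x : G) (n : ℤ), c < f x → c < f (-x) → c < f (n • x) := by
    intro x n hx hx'
    obtain ⟨k, rfl | rfl⟩ := n.eq_nat_or_neg
    · rw [natCast_zsmul]; exact hmulnat x k hx
    · rw [neg_smul, natCast_zsmul, ← neg_nsmul]
      exact hmulnat (-x) k hx'
  -- sums of elements with f > c have f > c
  have hsum : ∀ (s : Finset (Fin m)) (g : Fin m → G),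
      (∀ i ∈ s, c < f (g i)) → c < f (∑ i ∈ s, g i) := by
    intro s g hg
    induction s using Finset.cons_induction with
    | empty => simpa [h0] using hy₀'
    | cons a s ha ih =>
      rw [Finset.sum_cons]
      refine lt_of_lt_of_le (lt_min (hg a (Finset.mem_cons_self a s)) ?_) (hf _ _)
      exact ih fun i hi => hg i (Finset.mem_cons_of_mem hi)
  -- key: any integer combination of the y i has f > c, including its negation
  have hcomb : ∀ n : Fin m → ℤ, c < f (∑ i, n i • y i) := by
    intro n
    exact hsum _ _ fun i _ => hmul (y i) (n i) (hy i).1 (hy i).2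
  intro n₀ n h
  by_contra hn₀
  rcases lt_or_gt_of_ne hn₀ with hlt | hgt
  · -- n₀ < 0 : n₀ • y₀ has f ≤ c but equals the sum, f > c
    obtain ⟨k, hk⟩ : ∃ k : ℕ, n₀ = -((k : ℤ) + 1) := ⟨(-n₀ - 1).toNat, by omega⟩
    have h1 : f (n₀ • y₀) ≤ c := by
      rw [hk, neg_smul]; exact hneg k
    have h2 : c < f (n₀ • y₀) := h ▸ hcomb n
    exact absurd h1 (not_le.mpr h2)
  · -- n₀ > 0 : -(n₀ • y₀) has f ≤ c but equals -(sum) = ∑ (-n i) • y i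
    obtain ⟨k, hk⟩ : ∃ k : ℕ, n₀ = (k : ℤ) + 1 := ⟨(n₀ - 1).toNat, by omega⟩
    have h1 : f (-(n₀ • y₀)) ≤ c := by rw [hk]; exact hneg k
    have heq : -(n₀ • y₀) = ∑ i, (-n i) • y i := by
      rw [h, ← Finset.sum_neg_distrib]
      simp [neg_smul]
    have h2 : c < f (-(n₀ • y₀)) := heq ▸ hcomb (fun i => -n i)
    exact absurd h1 (not_le.mpr h2)
end

section
/- Fix r ∈ (0,∞] and set G_r := {z ∈ G : r ≤ f(z) and r ≤ f(−z)}. Let (x_k)_{k ∈ ℕ} be a sequence in G with f(x_k) = ⊤ for all k, f(−x_{k+1}) < f(−x_k) for all k (the values f(−x_k) are strictly decreasing), and f(−x_0) < r. Then for every finitely supported function c : ℕ → ℤ, if ∑_k c(k) • x_k ∈ G_r then c = 0; in particular the images of the x_k in the quotient group G/G_r are linearly independent over ℤ, so G/G_r contains ℤ^∞ as a subgroup. (Abstract form of the paper's Theorem that Θ³_ℤ/Θ³_{ℤ,r} contains ℤ^∞ for every r ∈ (0,∞].) -/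
open scoped ENNReal

section Aux

variable {G : Type*} [AddCommGroup G] (f : G → ℝ≥0∞)

lemma stmt7_nsmul_top (hf : ∀ x y : G, min (f x) (f y) ≤ f (x + y)) (h0 : f 0 = ⊤) (y : G) (hy : f y = ⊤) : ∀ n : ℕ, f (n • y) = ⊤ := by
  intro n
  induction n with
  | zero => simpa using h0
  | succ n ih =>
    have := hf (n • y) y
    rw [ih, hy] at this
    simp only [min_self] at this
    have : f (n • y + y) = ⊤ := top_le_iff.mp this
    simpa [succ_nsmul] using this

lemma stmt7_nsmul_ge (hf : ∀ x y : G, min (f x) (f y) ≤ f (x + y)) (y : G) : ∀ n : ℕ, 0 < n → f y ≤ f (n • y) := by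
  intro n hn
  induction n with
  | zero => exact absurd hn (lt_irrefl 0)
  | succ n ih =>
    rcases Nat.eq_zero_or_pos n with h | h
    · subst h; simp
    · have h1 := ih h
      have := hf (n • y) y
      calc f y ≤ min (f (n • y)) (f y) := le_min h1 le_rfl
        _ ≤ f (n • y + y) := hf _ _
        _ = f ((n + 1) • y) := by rw [succ_nsmul]

lemma stmt7_zsmul_ge (hf : ∀ x y : G, min (f x) (f y) ≤ f (x + y)) (h0 : f 0 = ⊤) (y : G) (hy : f y = ⊤) (n : ℤ) : f (-y) ≤ f (n • y) := by
  rcases le_or_gt 0 n with h | h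
  · have : n • y = n.toNat • y := by
      rw [← natCast_zsmul, Int.toNat_of_nonneg h]
    rw [this, stmt7_nsmul_top f hf h0 y hy]
    exact le_top
  · have hpos : 0 < (-n).toNat := by omega
    have : n • y = (-n).toNat • (-y) := by
      rw [← natCast_zsmul, Int.toNat_of_nonneg (by omega : (0:ℤ) ≤ -n)]
      simp
    rw [this]
    exact stmt7_nsmul_ge f hf (-y) (-n).toNat hpos

lemma stmt7_sum_gt (hf : ∀ x y : G, min (f x) (f y) ≤ f (x + y)) (h0 : f 0 = ⊤) (B : ℝ≥0∞) (hB : B < ⊤) (s : Finset ℕ) (g : ℕ → G)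
    (hs : ∀ k ∈ s, B < f (g k)) : B < f (∑ k ∈ s, g k) := by
  classical
  induction s using Finset.induction_on with
  | empty => simpa [h0] using hB
  | @insert a s' hk ih =>
    rw [Finset.sum_insert hk]
    have h1 : B < f (g a) := hs a (Finset.mem_insert_self _ _)
    have h2 : B < f (∑ k ∈ s', g k) := ih fun k hk' => hs k (Finset.mem_insert_of_mem hk')
    exact lt_of_lt_of_le (lt_min h1 h2) (hf _ _)

end Aux

/-- Abstract form of the theorem that `Θ³_ℤ/Θ³_{ℤ,r}` contains `ℤ^∞`: fix `r ∈ (0,∞]` and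
let `G_r = {z : r ≤ f z ∧ r ≤ f (-z)}`.  If `f (x k) = ⊤` for all `k`, the values
`f (-(x k))` are strictly decreasing, and `f (-(x 0)) < r`, then any finitely supported
`c : ℕ →₀ ℤ` with `∑ k, c k • x k ∈ G_r` is zero; hence the images of the `x k` in
`G / G_r` are linearly independent over `ℤ`. -/
theorem stmt_7 {G : Type*} [AddCommGroup G] (f : G → ℝ≥0∞)
    (hf : ∀ x y : G, min (f x) (f y) ≤ f (x + y)) (h0 : f 0 = ⊤)
    (r : ℝ≥0∞) (hr : 0 < r)
    (x : ℕ → G)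
    (htop : ∀ k : ℕ, f (x k) = ⊤)
    (hdec : ∀ k : ℕ, f (-(x (k + 1))) < f (-(x k)))
    (h0r : f (-(x 0)) < r) :
    ∀ c : ℕ →₀ ℤ,
      (c.sum fun k n => n • x k) ∈ {z : G | r ≤ f z ∧ r ≤ f (-z)} → c = 0 := by
  classical
  have hsa : StrictAnti fun k => f (-(x k)) := strictAnti_nat_of_succ_lt hdec
  -- key lemma: if leading coefficient positive, contradiction
  have key : ∀ (c : ℕ →₀ ℤ) (j : ℕ), (∀ k ∈ c.support, k ≤ j) → 0 < c j →
      ¬ ((c.sum fun k n => n • x k) ∈ {z : G | r ≤ f z ∧ r ≤ f (-z)}) := by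
    intro c j hjmax hcj ⟨hz1, hz2⟩
    set z := c.sum fun k n => n • x k with hzdef
    have hjsup : j ∈ c.support := Finsupp.mem_support_iff.mpr hcj.ne'
    set B := f (-(x j)) with hBdef
    have hB0 : B ≤ f (-(x 0)) := hsa.antitone (Nat.zero_le j)
    have hBr : B < r := lt_of_le_of_lt hB0 h0r
    have hBtop : B < ⊤ := lt_of_lt_of_le hBr le_top
    -- z - x j
    have hzsum : z = c j • x j + ∑ k ∈ c.support.erase j, c k • x k := by
      rw [hzdef, Finsupp.sum, ← Finset.add_sum_erase _ _ hjsup]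
    have hsplit : z - x j = ((c j - 1) • x j + ∑ k ∈ c.support.erase j, c k • x k) := by
      rw [hzsum, sub_smul, one_smul]
      abel
    have h1 : B < f ((c j - 1) • x j) := by
      have hnn : (0:ℤ) ≤ c j - 1 := by omega
      have : (c j - 1) • x j = (c j - 1).toNat • x j := by
        rw [← natCast_zsmul, Int.toNat_of_nonneg hnn]
      rw [this, stmt7_nsmul_top f hf h0 (x j) (htop j)]
      exact hBtop
    have h2 : B < f (∑ k ∈ c.support.erase j, c k • x k) := by
      apply stmt7_sum_gt f hf h0 B hBtop
      intro k hk
      have hkj : k < j :=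
        lt_of_le_of_ne (hjmax k (Finset.mem_of_mem_erase hk)) (Finset.ne_of_mem_erase hk)
      have hlt : B < f (-(x k)) := hsa hkj
      exact lt_of_lt_of_le hlt (stmt7_zsmul_ge f hf h0 (x k) (htop k) (c k))
    have h3 : B < f (z - x j) := by
      rw [hsplit]
      exact lt_of_lt_of_le (lt_min h1 h2) (hf _ _)
    have h4 : B < f (-z) := lt_of_lt_of_le hBr hz2
    have h5 : B < f (-(x j)) := by
      have heq : -(x j) = -z + (z - x j) := by abel
      rw [heq]
      exact lt_of_lt_of_le (lt_min h4 h3) (hf _ _)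
    exact lt_irrefl B h5
  intro c hc
  by_contra hne
  have hsup : c.support.Nonempty := Finsupp.support_nonempty_iff.mpr hne
  set j := c.support.max' hsup with hj
  have hjmax : ∀ k ∈ c.support, k ≤ j := fun k hk => Finset.le_max' _ k hk
  have hjsup : j ∈ c.support := Finset.max'_mem _ hsup
  have hcj : c j ≠ 0 := Finsupp.mem_support_iff.mp hjsup
  rcases lt_or_gt_of_ne hcj with hneg | hpos
  · -- apply key to -c
    have hsupeq : (-c).support = c.support := Finsupp.support_neg c
    have hsum : ((-c).sum fun k n => n • x k) = -(c.sum fun k n => n • x k) := by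
      rw [Finsupp.sum, Finsupp.sum, hsupeq, ← Finset.sum_neg_distrib]
      exact Finset.sum_congr rfl fun k _ => by simp [neg_smul]
    refine key (-c) j (by rw [hsupeq]; exact hjmax) (by simpa using hneg) ?_
    rw [hsum]
    exact ⟨hc.2, by simpa using hc.1⟩
  · exact key c j hjmax hpos hc
end

section
/- Define σ : G → EReal by σ(x) := sup{ (s : EReal) : s ∈ ℝ, s ≤ 0, and R(x, s) = ⊤ } (the supremum of the empty set being −∞). Then for all x, y ∈ G one has σ(x + y) ≥ σ(x) + σ(y). (Abstract form of the paper's Theorem: s_∞(Y₁ # Y₂) ≥ s_∞(Y₁) + s_∞(Y₂), where s_∞(Y) = sup{s ∈ [−∞,0] : r_s(Y) = ∞}.) -/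
/-- Abstract form of the theorem `s_∞(Y₁ # Y₂) ≥ s_∞(Y₁) + s_∞(Y₂)`: let
`R : G → ℝ → EReal` be antitone in the second variable on nonpositive arguments and
satisfy the connected-sum inequality; define
`σ x = sup {(s : EReal) : s ∈ ℝ, s ≤ 0, R x s = ⊤}` (the sup of the empty set being
`⊥ = -∞`).  Then `σ (x + y) ≥ σ x + σ y` for all `x, y`. -/
theorem stmt_8 {G : Type*} [AddCommGroup G] (R : G → ℝ → EReal)
    (hmono : ∀ (x : G) (s s' : ℝ), s ≤ s' → s' ≤ 0 → R x s' ≤ R x s)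
    (hconn : ∀ (x y : G) (s₁ s₂ : ℝ), s₁ ≤ 0 → s₂ ≤ 0 →
      min (R x s₁ + (s₂ : EReal)) (R y s₂ + (s₁ : EReal)) ≤ R (x + y) (s₁ + s₂))
    (σ : G → EReal)
    (hσ : ∀ x : G, σ x = sSup {e : EReal | ∃ s : ℝ, e = (s : EReal) ∧ s ≤ 0 ∧ R x s = ⊤}) :
    ∀ x y : G, σ x + σ y ≤ σ (x + y) := by
  intro x y
  apply EReal.add_le_of_forall_lt
  intro a' ha' b' hb'
  rw [hσ x, lt_sSup_iff] at ha'
  rw [hσ y, lt_sSup_iff] at hb'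
  obtain ⟨e₁, ⟨s₁, rfl, hs₁, hR₁⟩, hlt₁⟩ := ha'
  obtain ⟨e₂, ⟨s₂, rfl, hs₂, hR₂⟩, hlt₂⟩ := hb'
  have hmem : ((s₁ + s₂ : ℝ) : EReal) ∈
      {e : EReal | ∃ s : ℝ, e = (s : EReal) ∧ s ≤ 0 ∧ R (x + y) s = ⊤} := by
    refine ⟨s₁ + s₂, rfl, by linarith, ?_⟩
    have h := hconn x y s₁ s₂ hs₁ hs₂
    rw [hR₁, hR₂] at h
    have h1 : (⊤ : EReal) + (s₂ : EReal) = ⊤ := EReal.top_add_coe s₂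
    have h2 : (⊤ : EReal) + (s₁ : EReal) = ⊤ := EReal.top_add_coe s₁
    rw [h1, h2, min_self] at h
    exact top_le_iff.mp h
  calc a' + b' ≤ ((s₁ : EReal) + (s₂ : EReal)) :=
        add_le_add hlt₁.le hlt₂.le
    _ = ((s₁ + s₂ : ℝ) : EReal) := by rw [EReal.coe_add]
    _ ≤ σ (x + y) := by rw [hσ (x + y)]; exact le_sSup hmem
end

section
/- Let D₁, D₀ be ℚ-vector spaces with a linear map ∂_D : D₁ → D₀ and a linear functional θ_D : D₁ → ℚ, and let CW₁ : D₁ → E₁, CW₀ : D₀ → E₀ and f : D₀ → ℚ be linear maps satisfying ∂_E ∘ CW₁ = CW₀ ∘ ∂_D and θ_D + f ∘ ∂_D = Θ_E ∘ CW₁. If there exist linear functionals f_B : B₀ → ℚ and f_C : C₀ → ℚ with θ_B = f_B ∘ ∂_B and θ_C = f_C ∘ ∂_C (i.e. θ_B and θ_C are coboundaries), then there exists a linear functional g : D₀ → ℚ with θ_D = g ∘ ∂_D (i.e. θ_D is a coboundary). (This is the algebraic core of the paper's Theorem that if the obstruction classes of Y₁ and Y₂ are coboundaries then so is that of Y₁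 # Y₂, yielding the connected sum formula for r_s.) -/
open TensorProduct

/-- Algebraic core of the connected sum formula: with
`E₁ = (B₁ ⊗ C₀) × (B₀ ⊗ C₁) × B₁ × C₁` and `E₀ = (B₀ ⊗ C₀) × B₀ × C₀`, the differential
`∂_E (u, v, b, c) = ((∂_B ⊗ id) u + (id ⊗ ∂_C) v, (id ⊗ θ_C) v + ∂_B b, (θ_B ⊗ id) u + ∂_C c)`
and functional `Θ_E (u, v, b, c) = θ_B b + θ_C c`; if `∂_E ∘ CW₁ = CW₀ ∘ ∂_D`,
`θ_D + f ∘ ∂_D = Θ_E ∘ CW₁`, and `θ_B`, `θ_C` are coboundaries, then `θ_D` is a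
coboundary. -/
theorem stmt_13
    (B₁ B₀ C₁ C₀ D₁ D₀ : Type*)
    [AddCommGroup B₁] [Module ℚ B₁] [AddCommGroup B₀] [Module ℚ B₀]
    [AddCommGroup C₁] [Module ℚ C₁] [AddCommGroup C₀] [Module ℚ C₀]
    [AddCommGroup D₁] [Module ℚ D₁] [AddCommGroup D₀] [Module ℚ D₀]
    (dB : B₁ →ₗ[ℚ] B₀) (dC : C₁ →ₗ[ℚ] C₀)
    (θB : B₁ →ₗ[ℚ] ℚ) (θC : C₁ →ₗ[ℚ] ℚ)
    (dE : ((B₁ ⊗[ℚ] C₀) × (B₀ ⊗[ℚ] C₁) × B₁ × C₁) →ₗ[ℚ] ((B₀ ⊗[ℚ] C₀) × B₀ × C₀))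
    (hdE : ∀ (u : B₁ ⊗[ℚ] C₀) (v : B₀ ⊗[ℚ] C₁) (b : B₁) (c : C₁),
      dE (u, v, b, c) =
        (TensorProduct.map dB LinearMap.id u + TensorProduct.map LinearMap.id dC v,
         (TensorProduct.rid ℚ B₀).toLinearMap (LinearMap.lTensor B₀ θC v) + dB b,
         (TensorProduct.lid ℚ C₀).toLinearMap (LinearMap.rTensor C₀ θB u) + dC c))
    (ΘE : ((B₁ ⊗[ℚ] C₀) × (B₀ ⊗[ℚ] C₁) × B₁ × C₁) →ₗ[ℚ] ℚ)
    (hΘE : ∀ (u : B₁ ⊗[ℚ] C₀) (v : B₀ ⊗[ℚ] C₁) (b : B₁) (c : C₁),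
      ΘE (u, v, b, c) = θB b + θC c)
    (dD : D₁ →ₗ[ℚ] D₀) (θD : D₁ →ₗ[ℚ] ℚ)
    (CW₁ : D₁ →ₗ[ℚ] ((B₁ ⊗[ℚ] C₀) × (B₀ ⊗[ℚ] C₁) × B₁ × C₁))
    (CW₀ : D₀ →ₗ[ℚ] ((B₀ ⊗[ℚ] C₀) × B₀ × C₀))
    (f : D₀ →ₗ[ℚ] ℚ)
    (hcomm : dE.comp CW₁ = CW₀.comp dD)
    (htheta : θD + f.comp dD = ΘE.comp CW₁)
    (hB : ∃ fB : B₀ →ₗ[ℚ] ℚ, θB = fB.comp dB)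
    (hC : ∃ fC : C₀ →ₗ[ℚ] ℚ, θC = fC.comp dC) :
    ∃ g : D₀ →ₗ[ℚ] ℚ, θD = g.comp dD := by

  obtain ⟨fB, hfB⟩ := hB
  obtain ⟨fC, hfC⟩ := hC
  set F₁ : (B₀ ⊗[ℚ] C₀) →ₗ[ℚ] ℚ := TensorProduct.lift (fB.smulRight fC) with hF₁
  have lemA : ∀ v : B₀ ⊗[ℚ] C₁,
      fB ((TensorProduct.rid ℚ B₀).toLinearMap (LinearMap.lTensor B₀ θC v))
        = F₁ (TensorProduct.map LinearMap.id dC v) := by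
    intro v
    induction v using TensorProduct.induction_on with
    | zero => simp
    | tmul b0 c1 =>
        simp [hF₁, hfC, mul_comm]
    | add x y hx hy =>
        simp only [LinearEquiv.coe_coe] at hx hy
        simp [hx, hy]
  have lemB : ∀ u : B₁ ⊗[ℚ] C₀,
      fC ((TensorProduct.lid ℚ C₀).toLinearMap (LinearMap.rTensor C₀ θB u))
        = F₁ (TensorProduct.map dB LinearMap.id u) := by
    intro u
    induction u using TensorProduct.induction_on with
    | zero => simp
    | tmul b1 c0 =>
        simp [hF₁, hfB, mul_comm]
    | add x y hx hy =>
        simp only [LinearEquiv.coe_coe] at hx hy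
        simp [hx, hy]
  refine ⟨(fB ∘ₗ (LinearMap.fst ℚ B₀ C₀) ∘ₗ (LinearMap.snd ℚ (B₀ ⊗[ℚ] C₀) (B₀ × C₀))
    + fC ∘ₗ (LinearMap.snd ℚ B₀ C₀) ∘ₗ (LinearMap.snd ℚ (B₀ ⊗[ℚ] C₀) (B₀ × C₀))
    - F₁ ∘ₗ (LinearMap.fst ℚ (B₀ ⊗[ℚ] C₀) (B₀ × C₀))) ∘ₗ CW₀ - f, ?_⟩
  ext x
  have h1 : dE (CW₁ x) = CW₀ (dD x) := congrFun (congrArg DFunLike.coe hcomm) x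
  have h2 : θD x + f (dD x) = ΘE (CW₁ x) := congrFun (congrArg DFunLike.coe htheta) x
  rcases hw : CW₁ x with ⟨u, v, b, c⟩
  rw [hw] at h1 h2
  rw [hdE] at h1
  rw [hΘE] at h2
  have e1 : TensorProduct.map dB LinearMap.id u + TensorProduct.map LinearMap.id dC v
      = (CW₀ (dD x)).1 := congrArg Prod.fst h1
  have e2 : (TensorProduct.rid ℚ B₀).toLinearMap (LinearMap.lTensor B₀ θC v) + dB b
      = (CW₀ (dD x)).2.1 := congrArg (fun p => p.2.1) h1
  have e3 : (TensorProduct.lid ℚ C₀).toLinearMap (LinearMap.rTensor C₀ θB u) + dC c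
      = (CW₀ (dD x)).2.2 := congrArg (fun p => p.2.2) h1
  have hb : θB b = fB (dB b) := congrFun (congrArg DFunLike.coe hfB) b
  have hc : θC c = fC (dC c) := congrFun (congrArg DFunLike.coe hfC) c
  have key : θD x
      = fB (CW₀ (dD x)).2.1 + fC (CW₀ (dD x)).2.2 - F₁ (CW₀ (dD x)).1 - f (dD x) := by
    rw [← e1, ← e2, ← e3]
    have := h2
    simp only [map_add, hb, hc] at this ⊢
    rw [lemA, lemB]
    linarith
  simp only [LinearMap.comp_apply, LinearMap.sub_apply, LinearMap.add_apply,
    LinearMap.fst_apply, LinearMap.snd_apply]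
  rw [key]
end
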